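/- arXiv:1604.06785 — 5 statements merged into one kernel-verified Lean document; each statement's English description precedes it below -/
import Mathlib

section
/- Let W₁, W₂ be positive semidefinite n×n Hermitian matrices and R a positive semidefinite matrix with trace at most P_T. Define C(R) = ln det(I + W₁R) - ln det(I + W₂R) and C_w(R) = ln det(I + W₁R) - tr(W₂R). Then C_w(R) ≤ C(R) ≤ C_w(R) + (1/2)·∑ᵢ λᵢ(W₂R)², where λᵢ(W₂R) are the (nonnegative) eigenvalues of W₂R. -/
open Matrix Polynomial
open scoped ComplexOrder

private lemma aux_log_le (x : ℝ) (hx : 0 ≤ x) : Real.log (1 + x) ≤ x := by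
  have := Real.log_le_sub_one_of_pos (by linarith : (0:ℝ) < 1 + x)
  linarith

private lemma aux_hasDeriv (t : ℝ) (ht : -1 < t) :
    HasDerivAt (fun s : ℝ => s ^ 2 / 2 - s + Real.log (1 + s)) (t - 1 + (1 + t)⁻¹) t := by
  have h1 : HasDerivAt (fun s : ℝ => Real.log (1 + s)) (1 + t)⁻¹ t := by
    have := ((hasDerivAt_id t).const_add 1).log (by linarith : (1:ℝ) + t ≠ 0)
    simpa using this
  have h2 : HasDerivAt (fun s : ℝ => s ^ 2 / 2 - s) (t - 1) t := by
    have := ((hasDerivAt_pow 2 t).div_const 2).sub (hasDerivAt_id t)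
    exact this.congr_deriv (by norm_num)
  exact h2.add h1

private lemma aux_key (x : ℝ) (hx : 0 ≤ x) : x - Real.log (1 + x) ≤ x ^ 2 / 2 := by
  have hmono : MonotoneOn (fun s : ℝ => s ^ 2 / 2 - s + Real.log (1 + s)) (Set.Ici (0:ℝ)) := by
    refine monotoneOn_of_deriv_nonneg (convex_Ici 0) ?_ ?_ ?_
    · intro t ht
      exact (aux_hasDeriv t (by simp at ht; linarith)).continuousAt.continuousWithinAt
    · intro t ht
      rw [interior_Ici] at ht
      have ht' : (0:ℝ) < t := ht
      exact (aux_hasDeriv t (by linarith)).differentiableAt.differentiableWithinAt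
    · intro t ht
      rw [interior_Ici] at ht
      have ht' : (0:ℝ) < t := ht
      rw [(aux_hasDeriv t (by linarith)).deriv]
      have hpos : (0:ℝ) < 1 + t := by linarith
      have h1 : (1 + t) * (1 + t)⁻¹ = 1 := mul_inv_cancel₀ (ne_of_gt hpos)
      nlinarith [inv_nonneg.mpr hpos.le]
  have h0 := hmono (Set.self_mem_Ici) (Set.mem_Ici.mpr hx) hx
  simp only at h0
  simp only [ne_eq, OfNat.ofNat_ne_zero, not_false_eq_true, zero_pow, zero_div, sub_zero,
    add_zero, Real.log_one] at h0
  linarith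

theorem weak_eavesdropper_rate_bounds {n : ℕ}
    (W₁ W₂ R : Matrix (Fin n) (Fin n) ℂ) (P_T : ℝ)
    (hW₁ : W₁.PosSemidef) (hW₂ : W₂.PosSemidef) (hR : R.PosSemidef)
    (htr : (R.trace).re ≤ P_T)
    (μ : Fin n → ℝ) (hμnn : ∀ i, 0 ≤ μ i)
    (hμ : (W₂ * R).charpoly = ∏ i, (X - C (μ i : ℂ))) :
    (Real.log ((1 + W₁ * R).det.re) - ((W₂ * R).trace).re
        ≤ Real.log ((1 + W₁ * R).det.re) - Real.log ((1 + W₂ * R).det.re)) ∧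
    (Real.log ((1 + W₁ * R).det.re) - Real.log ((1 + W₂ * R).det.re)
        ≤ Real.log ((1 + W₁ * R).det.re) - ((W₂ * R).trace).re
            + (1 / 2) * ∑ i, (μ i) ^ 2) := by
  -- roots of the charpoly
  have hroots : ((W₂ * R).charpoly).roots = Finset.univ.val.map (fun i => (μ i : ℂ)) := by
    rw [hμ]
    have : (∏ i : Fin n, (X - C (μ i : ℂ)))
        = ((Finset.univ.val.map (fun i => (μ i : ℂ))).map (fun a => X - C a)).prod := by
      simp [Finset.prod_eq_multiset_prod, Multiset.map_map, Function.comp_def]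
    rw [this, roots_multiset_prod_X_sub_C]
  -- trace
  have htrace : ((W₂ * R).trace).re = ∑ i, μ i := by
    have h := trace_eq_sum_roots_charpoly (W₂ * R)
    rw [hroots] at h
    have : (Finset.univ.val.map (fun i => (μ i : ℂ))).sum = ((∑ i, μ i : ℝ) : ℂ) := by
      push_cast
      simp [Finset.sum_eq_multiset_sum]
    rw [this] at h
    rw [h, Complex.ofReal_re]
  -- determinant
  have hdet : (1 + W₂ * R).det = ((∏ i, (1 + μ i) : ℝ) : ℂ) := by
    have h1 : ((W₂ * R).charpoly).eval (-1) = ((-1 : ℂ) ^ n) * (1 + W₂ * R).det := by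
      rw [Matrix.charpoly, _root_.eval_det, matPolyEquiv_charmatrix]
      have : Polynomial.eval (Matrix.scalar (Fin n) (-1 : ℂ))
          ((X : (Matrix (Fin n) (Fin n) ℂ)[X]) - C (W₂ * R))
          = -(1 + W₂ * R) := by
        simp [Matrix.scalar, neg_add]
        ext i j
        simp [Matrix.diagonal, Matrix.one_apply]
        split <;> simp_all <;> ring
      rw [this, Matrix.det_neg]
      simp
    have h2 : ((W₂ * R).charpoly).eval (-1) = ((-1 : ℂ) ^ n) * ∏ i, (1 + (μ i : ℂ)) := by
      rw [hμ]
      simp only [eval_prod, eval_sub, eval_X, eval_C]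
      rw [show (fun i => (-1 : ℂ) - (μ i : ℂ)) = fun i => (-1) * (1 + (μ i : ℂ)) by
        funext i; ring]
      rw [Finset.prod_mul_distrib]
      simp
    have h3 : ((-1 : ℂ) ^ n) * (1 + W₂ * R).det = ((-1 : ℂ) ^ n) * ∏ i, (1 + (μ i : ℂ)) :=
      h1 ▸ h2
    have h4 := mul_left_cancel₀ (pow_ne_zero n (by norm_num : (-1:ℂ) ≠ 0)) h3
    rw [h4]
    push_cast
    ring_nf
  have hdetre : (1 + W₂ * R).det.re = ∏ i, (1 + μ i) := by rw [hdet, Complex.ofReal_re]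
  have hpos : ∀ i, (0:ℝ) < 1 + μ i := fun i => by have := hμnn i; linarith
  have hlogdet : Real.log ((1 + W₂ * R).det.re) = ∑ i, Real.log (1 + μ i) := by
    rw [hdetre, Real.log_prod (fun i _ => (hpos i).ne')]
  constructor
  · have h1 : ∑ i, Real.log (1 + μ i) ≤ ∑ i, μ i :=
      Finset.sum_le_sum (fun i _ => aux_log_le (μ i) (hμnn i))
    rw [hlogdet, htrace]
    linarith
  · have h2 : ∑ i, (μ i - Real.log (1 + μ i)) ≤ ∑ i, (μ i) ^ 2 / 2 :=
      Finset.sum_le_sum (fun i _ => aux_key (μ i) (hμnn i))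
    rw [Finset.sum_sub_distrib] at h2
    have h3 : ∑ i, (μ i) ^ 2 / 2 = (1/2) * ∑ i, (μ i) ^ 2 := by
      rw [Finset.mul_sum]; congr 1; funext i; ring
    rw [hlogdet, htrace]
    linarith [h3 ▸ h2]
end

section
/- Let W₁, W₂ ⪰ 0 be Hermitian n×n matrices, P_T > 0, and let C_s = max over R ⪰ 0 with tr R ≤ P_T of [ln det(I+W₁R) - ln det(I+W₂R)], and C_w = max over the same set of [ln det(I+W₁R) - tr(W₂R)]. Then C_w ≤ C_s ≤ C_w + (P_T²/2)·λ₁(W₂)², where λ₁(W₂) is the largest eigenvalue of W₂. -/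
open Matrix
open scoped ComplexOrder

-- scalar

lemma sub_log_le_sq_half {x : ℝ} (hx : 0 ≤ x) : x - Real.log (1 + x) ≤ x ^ 2 / 2 := by
  have key : ∀ y : ℝ, 0 ≤ y →
      HasDerivAt (fun t : ℝ => Real.log (1 + t) - t + t ^ 2 / 2) ((1 + y)⁻¹ - 1 + y) y := by
    intro y hy
    have h1 : HasDerivAt (fun t : ℝ => 1 + t) 1 y := by
      simpa using (hasDerivAt_id y).const_add 1
    have h2 : HasDerivAt (fun t : ℝ => Real.log (1 + t)) ((1+y)⁻¹ * 1) y :=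
      (Real.hasDerivAt_log (by linarith)).comp y h1
    have h3 : HasDerivAt (fun t : ℝ => t ^ 2 / 2) (y) y := by
      simpa using ((hasDerivAt_pow 2 y).div_const 2)
    have h4 := (h2.sub (hasDerivAt_id y)).add h3
    rw [mul_one] at h4
    exact h4
  have mono : MonotoneOn (fun t : ℝ => Real.log (1 + t) - t + t ^ 2 / 2) (Set.Ici 0) := by
    apply monotoneOn_of_deriv_nonneg (convex_Ici 0)
    · exact fun y hy => ((key y hy).continuousAt.continuousWithinAt)
    · intro y hy
      rw [interior_Ici] at hy
      exact (key y (le_of_lt hy)).differentiableAt.differentiableWithinAt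
    · intro y hy
      rw [interior_Ici] at hy
      have hy' : (0:ℝ) < y := hy
      rw [(key y hy'.le).deriv]
      have hpos : (0:ℝ) < 1 + y := by linarith
      have : (1 + y)⁻¹ - 1 + y = y ^ 2 / (1 + y) := by field_simp; ring
      rw [this]; positivity
  have h0 := mono (Set.self_mem_Ici) (Set.mem_Ici.mpr hx) hx
  simp only [add_zero, Real.log_one] at h0
  linarith

variable {n : ℕ}

lemma conj_facts (S : Matrix (Fin n) (Fin n) ℂ) (hS : S.PosSemidef) :
    (1 + S).det = ∏ i, ((1 + hS.1.eigenvalues i : ℝ) : ℂ) ∧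
    S.trace = ∑ i, ((hS.1.eigenvalues i : ℝ) : ℂ) := by
  set U : Matrix (Fin n) (Fin n) ℂ := (hS.1.eigenvectorUnitary : Matrix (Fin n) (Fin n) ℂ)
  set D : Matrix (Fin n) (Fin n) ℂ := diagonal (RCLike.ofReal ∘ hS.1.eigenvalues)
  have hUU : U * star U = 1 := Unitary.coe_mul_star_self _
  have hUU' : star U * U = 1 := Unitary.coe_star_mul_self _
  have hdecomp : S = U * D * star U := hS.1.spectral_theorem
  constructor
  · have h1 : 1 + S = U * (1 + D) * star U := by
      rw [mul_add, add_mul, mul_one, hUU, ← hdecomp]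
    rw [h1, det_mul, det_mul]
    have : U.det * (1 + D).det * (star U).det = (1+D).det * (U * star U).det := by
      rw [det_mul]; ring
    rw [this, hUU, det_one, mul_one]
    have h2 : (1 : Matrix (Fin n) (Fin n) ℂ) + D
        = diagonal (fun i => ((1 + hS.1.eigenvalues i : ℝ) : ℂ)) := by
      rw [← diagonal_one, diagonal_add]
      congr 1
      funext i
      simp [D]
    rw [h2, det_diagonal]
  · conv_lhs => rw [hdecomp]
    rw [trace_mul_comm (U * D) (star U), ← mul_assoc, hUU', one_mul, trace_diagonal]
    rfl

lemma diag_re_nonneg {M : Matrix (Fin n) (Fin n) ℂ} (hM : M.PosSemidef) (i : Fin n) :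
    0 ≤ (M i i).re := by
  have h := hM.re_dotProduct_nonneg (Pi.single i 1)
  simpa [dotProduct, mulVec, Pi.single_apply, Finset.sum_ite_eq] using h

lemma trace_mul_le_lam (W R : Matrix (Fin n) (Fin n) ℂ) (hW : W.PosSemidef)
    (hR : R.PosSemidef) (lam : ℝ) (hlam : ∀ i, hW.1.eigenvalues i ≤ lam) :
    ((W * R).trace).re ≤ lam * (R.trace).re := by
  set U : Matrix (Fin n) (Fin n) ℂ := (hW.1.eigenvectorUnitary : Matrix (Fin n) (Fin n) ℂ)
  set D : Matrix (Fin n) (Fin n) ℂ := diagonal (RCLike.ofReal ∘ hW.1.eigenvalues)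
  have hUU : U * star U = 1 := Unitary.coe_mul_star_self _
  have hUU' : star U * U = 1 := Unitary.coe_star_mul_self _
  set M : Matrix (Fin n) (Fin n) ℂ := star U * R * U with hMdef
  have hMpsd : M.PosSemidef := by
    have := hR.conjTranspose_mul_mul_same U
    simpa [hMdef, star_eq_conjTranspose] using this
  have htr1 : (W * R).trace = (D * M).trace := by
    conv_lhs => rw [show W = U * D * star U from hW.1.spectral_theorem]
    rw [trace_mul_comm (U * D * star U) R, ← mul_assoc, ← mul_assoc,
      trace_mul_comm (R * U * D) (star U), ← mul_assoc, ← mul_assoc,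
      trace_mul_comm (star U * R * U) D]
  have htr2 : M.trace = R.trace := by
    rw [hMdef, trace_mul_comm (star U * R) U, ← mul_assoc, hUU, one_mul]
  rw [htr1, ← htr2]
  have hDM : (D * M).trace = ∑ i, (hW.1.eigenvalues i : ℂ) * M i i := by
    rw [trace]
    congr 1
    funext i
    simp [D, diag, diagonal_mul]
  rw [hDM, trace]
  have h1 : (∑ i, (hW.1.eigenvalues i : ℂ) * M i i).re
      = ∑ i, hW.1.eigenvalues i * (M i i).re := by
    rw [Complex.re_sum]
    congr 1
    funext i
    simp [Complex.mul_re]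
  rw [h1]
  have h2 : ((∑ i, M.diag i).re) = ∑ i, (M i i).re := by
    rw [Complex.re_sum]; rfl
  rw [h2, Finset.mul_sum]
  apply Finset.sum_le_sum
  intro i _
  exact mul_le_mul_of_nonneg_right (hlam i) (diag_re_nonneg hMpsd i)

lemma log_det_one_add_bounds (S : Matrix (Fin n) (Fin n) ℂ) (hS : S.PosSemidef) :
    Real.log (((1 + S).det).re) ≤ (S.trace).re ∧
      (S.trace).re - Real.log (((1 + S).det).re) ≤ ((S.trace).re) ^ 2 / 2 ∧
      0 ≤ (S.trace).re := by
  obtain ⟨hdet, htr⟩ := conj_facts S hS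
  have he : ∀ i, 0 ≤ hS.1.eigenvalues i := hS.eigenvalues_nonneg
  have hdet_re : ((1 + S).det).re = ∏ i, (1 + hS.1.eigenvalues i) := by
    rw [hdet, ← Complex.ofReal_prod, Complex.ofReal_re]
  have htr_re : (S.trace).re = ∑ i, hS.1.eigenvalues i := by
    rw [htr, ← Complex.ofReal_sum, Complex.ofReal_re]
  have hlog : Real.log (((1 + S).det).re) = ∑ i, Real.log (1 + hS.1.eigenvalues i) := by
    rw [hdet_re, Real.log_prod]
    intro i _
    have := he i; positivity
  have hlog_le : ∀ i, Real.log (1 + hS.1.eigenvalues i) ≤ hS.1.eigenvalues i := by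
    intro i
    have h1 : (0:ℝ) < 1 + hS.1.eigenvalues i := by have := he i; linarith
    have := Real.log_le_sub_one_of_pos h1
    linarith
  have htrnn : 0 ≤ (S.trace).re := by
    rw [htr_re]; exact Finset.sum_nonneg fun i _ => he i
  refine ⟨?_, ?_, htrnn⟩
  · rw [hlog, htr_re]
    exact Finset.sum_le_sum fun i _ => hlog_le i
  · rw [hlog, htr_re, ← Finset.sum_sub_distrib]
    calc ∑ i, (hS.1.eigenvalues i - Real.log (1 + hS.1.eigenvalues i))
        ≤ ∑ i, (hS.1.eigenvalues i) ^ 2 / 2 :=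
          Finset.sum_le_sum fun i _ => sub_log_le_sq_half (he i)
      _ = (∑ i, (hS.1.eigenvalues i) ^ 2) / 2 := by rw [Finset.sum_div]
      _ ≤ (∑ i, hS.1.eigenvalues i) ^ 2 / 2 := by
          apply div_le_div_of_nonneg_right ?_ (by norm_num)
          exact Finset.sum_sq_le_sq_sum_of_nonneg fun i _ => he i


lemma feasible_bounds (W₂ : Matrix (Fin n) (Fin n) ℂ) (hW₂ : W₂.PosSemidef)
    (R : Matrix (Fin n) (Fin n) ℂ) (hR : R.PosSemidef) :
    Real.log (((1 + W₂ * R).det).re) ≤ ((W₂ * R).trace).re ∧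
      ((W₂ * R).trace).re - Real.log (((1 + W₂ * R).det).re)
        ≤ (((W₂ * R).trace).re) ^ 2 / 2 ∧
      0 ≤ ((W₂ * R).trace).re := by
  obtain ⟨B, hB, hsq⟩ : ∃ B : Matrix (Fin n) (Fin n) ℂ, Bᴴ = B ∧ B * B = W₂ := by
    open scoped MatrixOrder in
    exact ⟨CFC.sqrt W₂, (CFC.sqrt_nonneg W₂).posSemidef.1, CFC.sqrt_mul_sqrt_self W₂ hW₂.nonneg⟩
  set S : Matrix (Fin n) (Fin n) ℂ := B * R * B with hSdef
  have hSpsd : S.PosSemidef := by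
    have := hR.mul_mul_conjTranspose_same B
    rwa [hB] at this
  have hdet : (1 + W₂ * R).det = (1 + S).det := by
    conv_lhs => rw [← hsq, mul_assoc]
    rw [det_one_add_mul_comm]
  have htrc : (W₂ * R).trace = S.trace := by
    conv_lhs => rw [← hsq, mul_assoc]
    rw [trace_mul_comm]
  rw [hdet, htrc]
  exact log_det_one_add_bounds S hSpsd

theorem secrecy_capacity_weak_eavesdropper_bounds {n : ℕ}
    (W₁ W₂ : Matrix (Fin n) (Fin n) ℂ) (P_T : ℝ) (hP : 0 < P_T)
    (hW₁ : W₁.PosSemidef) (hW₂ : W₂.PosSemidef)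
    (C_s C_w lam₁ : ℝ)
    (hlam₁ : IsGreatest (Set.range hW₂.1.eigenvalues) lam₁)
    (hCs : IsGreatest {c : ℝ | ∃ R : Matrix (Fin n) (Fin n) ℂ,
        R.PosSemidef ∧ (R.trace).re ≤ P_T ∧
        c = Real.log ((1 + W₁ * R).det.re) - Real.log ((1 + W₂ * R).det.re)} C_s)
    (hCw : IsGreatest {c : ℝ | ∃ R : Matrix (Fin n) (Fin n) ℂ,
        R.PosSemidef ∧ (R.trace).re ≤ P_T ∧
        c = Real.log ((1 + W₁ * R).det.re) - ((W₂ * R).trace).re} C_w) :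
    C_w ≤ C_s ∧ C_s ≤ C_w + P_T ^ 2 / 2 * lam₁ ^ 2 := by
  obtain ⟨i₀, hi₀⟩ := hlam₁.1
  have hlam_nonneg : 0 ≤ lam₁ := hi₀ ▸ hW₂.eigenvalues_nonneg i₀
  have hub : ∀ i, hW₂.1.eigenvalues i ≤ lam₁ := fun i => hlam₁.2 ⟨i, rfl⟩
  constructor
  · obtain ⟨R, hR, hRt, hceq⟩ := hCw.1
    have h1 := (feasible_bounds W₂ hW₂ R hR).1
    have h2 : Real.log ((1 + W₁ * R).det.re) - Real.log ((1 + W₂ * R).det.re) ≤ C_s :=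
      hCs.2 ⟨R, hR, hRt, rfl⟩
    rw [hceq]
    linarith
  · obtain ⟨R, hR, hRt, hceq⟩ := hCs.1
    obtain ⟨h1, h2, h3⟩ := feasible_bounds W₂ hW₂ R hR
    have htrb : ((W₂ * R).trace).re ≤ lam₁ * P_T := by
      calc ((W₂ * R).trace).re ≤ lam₁ * (R.trace).re :=
            trace_mul_le_lam W₂ R hW₂ hR lam₁ hub
        _ ≤ lam₁ * P_T := mul_le_mul_of_nonneg_left hRt hlam_nonneg
    have hsq : (((W₂ * R).trace).re) ^ 2 ≤ (lam₁ * P_T) ^ 2 :=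
      pow_le_pow_left₀ h3 htrb 2
    have h4 : Real.log ((1 + W₁ * R).det.re) - ((W₂ * R).trace).re ≤ C_w :=
      hCw.2 ⟨R, hR, hRt, rfl⟩
    rw [hceq]
    nlinarith [sq_nonneg (lam₁ * P_T)]
end

section
/- Fix ε > 0 and λ > 0, and define p(g) = ((ε+g)/(2εg))·(√(1 + (4εg/(ε+g)²)·max((g-ε)/λ - 1, 0)) - 1) for g > 0. Then p(g) > 0 if and only if g > ε + λ, and p is nondecreasing in g. -/
private lemma pa_key (ε lam g : ℝ) (hε : 0 < ε) (hlam : 0 < lam) (hg : 0 < g) :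
    0 ≤ ((ε + g) / (2 * ε * g)) *
        (Real.sqrt (1 + (4 * ε * g / (ε + g) ^ 2) * max ((g - ε) / lam - 1) 0) - 1) ∧
    ε * g * (((ε + g) / (2 * ε * g)) *
        (Real.sqrt (1 + (4 * ε * g / (ε + g) ^ 2) * max ((g - ε) / lam - 1) 0) - 1)) ^ 2
      + (ε + g) * (((ε + g) / (2 * ε * g)) *
        (Real.sqrt (1 + (4 * ε * g / (ε + g) ^ 2) * max ((g - ε) / lam - 1) 0) - 1))
      = max ((g - ε) / lam - 1) 0 := by
  set M : ℝ := max ((g - ε) / lam - 1) 0 with hMdef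
  have hM : 0 ≤ M := le_max_right _ _
  have hεg : 0 < ε + g := by linarith
  have hB : 0 ≤ 4 * ε * g / (ε + g) ^ 2 := by positivity
  have harg : (0:ℝ) ≤ 1 + (4 * ε * g / (ε + g) ^ 2) * M := by positivity
  set s : ℝ := Real.sqrt (1 + (4 * ε * g / (ε + g) ^ 2) * M) with hsdef
  have hs2 : s ^ 2 = 1 + (4 * ε * g / (ε + g) ^ 2) * M := Real.sq_sqrt harg
  have hs1 : 1 ≤ s := by
    have h1 : (1:ℝ) ≤ 1 + (4 * ε * g / (ε + g) ^ 2) * M := by nlinarith [mul_nonneg hB hM]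
    calc (1:ℝ) = Real.sqrt 1 := by simp
    _ ≤ s := Real.sqrt_le_sqrt h1
  have hs2' : (ε + g) ^ 2 * s ^ 2 = (ε + g) ^ 2 + 4 * ε * g * M := by
    rw [hs2]; field_simp
  constructor
  · have hA : 0 ≤ (ε + g) / (2 * ε * g) := by positivity
    have : 0 ≤ s - 1 := by linarith
    positivity
  · have hne1 : (ε + g) ≠ 0 := ne_of_gt hεg
    have hne2 : ε * g ≠ 0 := by positivity
    field_simp
    linear_combination hs2'

theorem power_allocation_active_modes (ε lam : ℝ) (hε : 0 < ε) (hlam : 0 < lam) :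
    (∀ g : ℝ, 0 < g →
      (0 < ((ε + g) / (2 * ε * g)) *
          (Real.sqrt (1 + (4 * ε * g / (ε + g) ^ 2) * max ((g - ε) / lam - 1) 0) - 1)
        ↔ ε + lam < g)) ∧
    MonotoneOn (fun g : ℝ =>
        ((ε + g) / (2 * ε * g)) *
          (Real.sqrt (1 + (4 * ε * g / (ε + g) ^ 2) * max ((g - ε) / lam - 1) 0) - 1))
      (Set.Ioi 0) := by
  constructor
  · intro g hg
    obtain ⟨hp0, heq⟩ := pa_key ε lam g hε hlam hg
    set p : ℝ := ((ε + g) / (2 * ε * g)) *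
        (Real.sqrt (1 + (4 * ε * g / (ε + g) ^ 2) * max ((g - ε) / lam - 1) 0) - 1) with hpdef
    constructor
    · intro hp
      -- M = εgp² + (ε+g)p > 0
      have hMpos : 0 < max ((g - ε) / lam - 1) 0 := by
        rw [← heq]; positivity
      have : 0 < (g - ε) / lam - 1 := by
        by_contra h
        push_neg at h
        rw [max_eq_right h] at hMpos
        exact lt_irrefl 0 hMpos
      have hlg : lam < g - ε := by
        have := (lt_div_iff₀ hlam).mp (by linarith : 1 < (g - ε) / lam)
        linarith
      linarith
    · intro hglt
      have hMpos : 0 < max ((g - ε) / lam - 1) 0 := by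
        have : 0 < (g - ε) / lam - 1 := by
          have : 1 < (g - ε) / lam := (lt_div_iff₀ hlam).mpr (by linarith)
          linarith
        exact lt_max_of_lt_left this
      rcases lt_or_eq_of_le hp0 with h | h
      · exact h
      · exfalso
        rw [← h] at heq
        simp at heq
        have h1 : 1 < (g - ε) / lam := (lt_div_iff₀ hlam).mpr (by linarith)
        nlinarith [heq]
  · intro g₁ hg₁ g₂ hg₂ h12
    simp only [Set.mem_Ioi] at hg₁ hg₂
    obtain ⟨hp1, heq1⟩ := pa_key ε lam g₁ hε hlam hg₁
    obtain ⟨hp2, heq2⟩ := pa_key ε lam g₂ hε hlam hg₂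
    set p₁ : ℝ := ((ε + g₁) / (2 * ε * g₁)) *
        (Real.sqrt (1 + (4 * ε * g₁ / (ε + g₁) ^ 2) * max ((g₁ - ε) / lam - 1) 0) - 1)
    set p₂ : ℝ := ((ε + g₂) / (2 * ε * g₂)) *
        (Real.sqrt (1 + (4 * ε * g₂ / (ε + g₂) ^ 2) * max ((g₂ - ε) / lam - 1) 0) - 1)
    show p₁ ≤ p₂
    by_contra hlt
    push_neg at hlt  -- p₂ < p₁
    have hp1pos : 0 < p₁ := lt_of_le_of_lt hp2 hlt
    -- M₁ > 0 hence both maxes are their arguments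
    have hM1pos : 0 < max ((g₁ - ε) / lam - 1) 0 := by rw [← heq1]; positivity
    have hM1arg : 0 < (g₁ - ε) / lam - 1 := by
      by_contra h; push_neg at h; rw [max_eq_right h] at hM1pos; exact lt_irrefl 0 hM1pos
    have hM1 : max ((g₁ - ε) / lam - 1) 0 = (g₁ - ε) / lam - 1 := max_eq_left hM1arg.le
    have hM2arg : 0 < (g₂ - ε) / lam - 1 := by
      have h : (g₁ - ε) / lam ≤ (g₂ - ε) / lam := by gcongr
      linarith
    have hM2 : max ((g₂ - ε) / lam - 1) 0 = (g₂ - ε) / lam - 1 := max_eq_left hM2arg.le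
    rw [hM1] at heq1
    rw [hM2] at heq2
    have E1 : lam * (ε * g₁ * p₁ ^ 2 + (ε + g₁) * p₁) = g₁ - ε - lam := by
      rw [heq1]; field_simp
    have E2 : lam * (ε * g₂ * p₂ ^ 2 + (ε + g₂) * p₂) = g₂ - ε - lam := by
      rw [heq2]; field_simp
    have hbound : lam * (ε * p₁ ^ 2 + p₁) ≤ 1 := by
      have h1 : lam * (ε * g₁ * p₁ ^ 2 + g₁ * p₁) ≤ g₁ := by
        nlinarith [mul_nonneg (mul_nonneg hlam.le hε.le) hp1]
      nlinarith [h1, hg₁]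
    have hterm1 : lam * (ε * g₂ * (p₂ ^ 2 - p₁ ^ 2) + (ε + g₂) * (p₂ - p₁)) < 0 := by
      have h1 : (0:ℝ) ≤ (p₁ - p₂) * (p₁ + p₂) :=
        mul_nonneg (by linarith) (by linarith)
      nlinarith [mul_pos hlam (mul_pos (show (0:ℝ) < ε + g₂ by linarith) (show (0:ℝ) < p₁ - p₂ by linarith)),
        mul_nonneg hlam.le (mul_nonneg (mul_nonneg hε.le hg₂.le) h1)]
    have hterm2 : lam * (g₂ - g₁) * (ε * p₁ ^ 2 + p₁) ≤ g₂ - g₁ := by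
      nlinarith [mul_nonneg (sub_nonneg.mpr h12) (sub_nonneg.mpr hbound)]
    linarith [E1, E2, hterm1, hterm2]
end

section
/- For positive reals g and ε with g > ε, the expression ((ε+g)/(2εg))·(√(1 + (4εg/(ε+g)²)·((g-ε)/λ - 1)) - 1) with λ satisfying √λ = β/P_T, β = √(1/ε - 1/g), converges, as P_T → ∞, to P_T·√(1/ε - 1/g)/β·(1+o(1)); in particular, for a single mode (β = √(1/ε - 1/g)), the allocated power is asymptotically P_T. -/
open Filter

theorem high_snr_power_asymptotics (g ε β : ℝ) (hε : 0 < ε) (hg : ε < g) (hβ : 0 < β) :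
    Tendsto (fun P_T : ℝ =>
        (((ε + g) / (2 * ε * g)) *
            (Real.sqrt (1 + (4 * ε * g / (ε + g) ^ 2) * ((g - ε) / (β ^ 2 / P_T ^ 2) - 1)) - 1))
          / (P_T * Real.sqrt (1 / ε - 1 / g) / β))
      atTop (nhds 1) := by
  have hg0 : 0 < g := hε.trans hg
  have hεg : 0 < ε + g := by linarith
  have hgε : 0 < g - ε := by linarith
  have hs2 : 0 < 1 / ε - 1 / g := by
    rw [sub_pos, div_lt_div_iff₀ hg0 hε]
    nlinarith
  set s : ℝ := Real.sqrt (1 / ε - 1 / g) with hs_def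
  have hs : 0 < s := Real.sqrt_pos.mpr hs2
  have hss : s ^ 2 = 1 / ε - 1 / g := Real.sq_sqrt hs2.le
  set c : ℝ := 4 * ε * g / (ε + g) ^ 2 with hc_def
  have hc : 0 < c := by positivity
  set K : ℝ := c * (g - ε) / β ^ 2 with hK_def
  have hK : 0 < K := by positivity
  set d : ℝ := (1 - c) / K with hd_def
  set e : ℝ := (ε + g) / (2 * ε * g) * β / s with he_def
  -- key identity for sqrt K
  have hK2 : Real.sqrt K = 2 * ε * g * s / ((ε + g) * β) := by
    have hss2 : ε * g * s ^ 2 = g - ε := by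
      rw [hss]; field_simp
    have key : K = (2 * ε * g * s) ^ 2 / ((ε + g) * β) ^ 2 := by
      rw [eq_div_iff (by positivity), hK_def, hc_def]
      field_simp
      linear_combination (-4) * hss2
    rw [key, ← div_pow, Real.sqrt_sq (by positivity)]
  have hev : ∀ᶠ P : ℝ in atTop,
      (((ε + g) / (2 * ε * g)) *
          (Real.sqrt (1 + c * ((g - ε) / (β ^ 2 / P ^ 2) - 1)) - 1)) / (P * s / β)
        = Real.sqrt (1 + d / P ^ 2) - e / P := by
    filter_upwards [eventually_gt_atTop (0 : ℝ)] with P hP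
    have hP2 : (0 : ℝ) < P ^ 2 := by positivity
    have harg : 1 + c * ((g - ε) / (β ^ 2 / P ^ 2) - 1)
        = (K * P ^ 2) * (1 + d / P ^ 2) := by
      rw [hd_def, hK_def]
      field_simp
      ring
    rw [harg, Real.sqrt_mul (by positivity), Real.sqrt_mul hK.le,
      Real.sqrt_sq hP.le, hK2, he_def]
    field_simp
  refine Tendsto.congr' (by filter_upwards [hev] with P h using h.symm) ?_
  have h1 : Tendsto (fun P : ℝ => Real.sqrt (1 + d / P ^ 2)) atTop (nhds 1) := by
    have hd0 : Tendsto (fun P : ℝ => d / P ^ 2) atTop (nhds 0) :=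
      tendsto_const_nhds.div_atTop (tendsto_pow_atTop two_ne_zero)
    have : Tendsto (fun P : ℝ => 1 + d / P ^ 2) atTop (nhds 1) := by
      simpa using tendsto_const_nhds.add hd0
    have := (Real.continuous_sqrt.tendsto 1).comp this
    rwa [Real.sqrt_one] at this
  have h2 : Tendsto (fun P : ℝ => e / P) atTop (nhds 0) :=
    tendsto_const_nhds.div_atTop tendsto_id
  simpa using h1.sub h2
end

section
/- Let Λ₁ = diag(a₁,...,aₙ) with aᵢ > 0, Λ₂ = diag(b₁,...,bₙ) with bᵢ ≥ 0 and bᵢ⁻¹ = aᵢ⁻¹ + α for some fixed α > 0 on all indices with λᵢ > 0, where λᵢ = max(1/λ - 1/aᵢ, 0) for some λ > 0. Then for each i with λᵢ > 0, (1/(aᵢ⁻¹ + λᵢ)) - (1/(bᵢ⁻¹ + λᵢ)) = λ' where λ' = αλ²/(1+αλ) is independent of i. -/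
theorem waterfilling_stationarity {n : ℕ} (a b : Fin n → ℝ) (α lam : ℝ)
    (hα : 0 < α) (hlam : 0 < lam)
    (ha : ∀ i, 0 < a i) (hb : ∀ i, 0 ≤ b i)
    (p : Fin n → ℝ) (hp : ∀ i, p i = max (1 / lam - 1 / a i) 0)
    (hrel : ∀ i, 0 < p i → (b i)⁻¹ = (a i)⁻¹ + α) :
    ∀ i, 0 < p i →
      1 / ((a i)⁻¹ + p i) - 1 / ((b i)⁻¹ + p i) = α * lam ^ 2 / (1 + α * lam) := by
  intro i hpi
  have hpi' : p i = 1 / lam - 1 / a i := by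
    rcases max_cases (1 / lam - 1 / a i) 0 with ⟨h1, _⟩ | ⟨h1, _⟩
    · rw [hp i, h1]
    · exfalso; rw [hp i, h1] at hpi; exact lt_irrefl 0 hpi
  have hb' := hrel i hpi
  have h1 : (a i)⁻¹ + p i = 1 / lam := by
    rw [hpi', one_div, one_div]; ring
  have h2 : (b i)⁻¹ + p i = α + 1 / lam := by
    rw [hb', hpi', one_div, one_div]; ring
  rw [h1, h2]
  have hlam' : lam ≠ 0 := ne_of_gt hlam
  have hd : 1 + α * lam ≠ 0 := by positivity
  have hd2 : α + 1 / lam ≠ 0 := by positivity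
  field_simp
  ring
end
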